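/- arXiv:2412.04221 — 5 statements merged into one kernel-verified Lean document; each statement's English description precedes it below -/
import Mathlib

section
/- Let k be a field of characteristic p > 0 and Q, P finite p-groups. If X is a subgroup of Q × P with trivial intersections X ∩ (Q × 1) = 1 and X ∩ (1 × P) = 1 (a diagonal subgroup), then the (kQ,kP)-bimodule k((Q×P)/X) satisfies k((Q×P)/X) ⊗_{kP} k ≅ k(Q/p₁(X)) as kQ-modules, where p₁(X) is the projection of X to Q. In particular, as an element of R_k(Q), this equals |Q : p₁(X)| · [k_Q], which is 0 in k ⊗_ℤ R_k(Q) unless p₁(X) = Q. -/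
open TensorProduct MulOpposite

/-- The balancing relations defining `M ⊗_{kG} N` inside `M ⊗[k] N`, for a right `kG`-module
`M` (a representation of `Gᵐᵒᵖ`) and a left `kG`-module `N`;  `M ⊗_{kG} N` is the quotient of
`M ⊗[k] N` by this submodule. -/
def balancedRel (k : Type) [Field k] (G : Type) [Group G]
    {M N : Type} [AddCommMonoid M] [Module k M] [AddCommMonoid N] [Module k N]
    (σ : Representation k Gᵐᵒᵖ M) (ρ : Representation k G N) :
    Submodule k (M ⊗[k] N) :=
  Submodule.span k {x | ∃ (g : G) (m : M) (n : N),
    x = σ (op g) m ⊗ₜ[k] n + (-1 : k) • (m ⊗ₜ[k] ρ g n)}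



/-- The map `(Q×P)/X → Q/p₁(X)` induced by the first projection. -/
def qmap {Q P : Type} [Group Q] [Group P] (X : Subgroup (Q × P)) :
    (Q × P) ⧸ X → Q ⧸ Subgroup.map (MonoidHom.fst Q P) X :=
  Quotient.map' Prod.fst (fun a b h => by
    rw [QuotientGroup.leftRel_apply] at *
    exact ⟨a⁻¹ * b, h, rfl⟩)

lemma qmap_mk {Q P : Type} [Group Q] [Group P] (X : Subgroup (Q × P)) (u : Q × P) :
    qmap X (QuotientGroup.mk u) = QuotientGroup.mk u.1 := rfl

set_option maxHeartbeats 1000000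

/-- Let `k` have characteristic `p`, `Q, P` finite `p`-groups, and `X ≤ Q × P` a
(twisted) diagonal subgroup (trivial intersections with `Q × 1` and `1 × P`).  The
`(kQ,kP)`-bimodule `k((Q×P)/X)` (with `q·[u]·y = [(q,y⁻¹)u]`) satisfies
`k((Q×P)/X) ⊗_{kP} k ≅ k(Q/p₁(X))` as `kQ`-modules, where `p₁(X)` is the projection of `X`
to `Q`.  In particular this element of `R_k(Q)` equals `|Q : p₁(X)|·[k_Q]`
(`k(Q/p₁(X))` has dimension `|Q : p₁(X)|` and, `Q` being a `p`-group, all its composition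
factors are trivial), and it is `0` in `k ⊗_ℤ R_k(Q)` unless `p₁(X) = Q`, since
`|Q : p₁(X)| = 0` in `k` in that case. -/
theorem stmt5 (p : ℕ) (hp : p.Prime) (k : Type) [Field k] [CharP k p]
    (Q P : Type) [Group Q] [Group P] [Fintype Q] [Fintype P]
    (hQ : IsPGroup p Q) (hP : IsPGroup p P)
    (X : Subgroup (Q × P))
    (hX1 : ∀ q : Q, (q, (1 : P)) ∈ X → q = 1)
    (hX2 : ∀ y : P, ((1 : Q), y) ∈ X → y = 1)
    -- the right `P`-action on `k((Q×P)/X)` :  `[u]·y = [(1,y⁻¹)·u]`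
    (σ : Representation k Pᵐᵒᵖ (((Q × P) ⧸ X) →₀ k))
    (hσ : ∀ (y : P) (u : Q × P),
      σ (op y) (Finsupp.single (QuotientGroup.mk u) (1 : k)) =
        Finsupp.single (QuotientGroup.mk ((1, y⁻¹) * u)) (1 : k)) :
    (∃ φ : (((Q × P) ⧸ X) →₀ k) ⊗[k] k →ₗ[k]
        ((Q ⧸ Subgroup.map (MonoidHom.fst Q P) X) →₀ k),
      LinearMap.ker φ = balancedRel k P σ (1 : Representation k P k) ∧
      Function.Surjective φ ∧
      -- `φ` is `Q`-equivariant, for the left `Q`-action `q·[u] = [(q,1)·u]` on `k((Q×P)/X)`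
      ∀ (q : Q) (m : ((Q × P) ⧸ X) →₀ k) (c : k),
        φ ((((Representation.ofMulAction k (Q × P) ((Q × P) ⧸ X)).comp
            (MonoidHom.inl Q P)) q (MonoidAlgebra.ofCoeff m)).coeff ⊗ₜ c) =
          Finsupp.mapDomain (fun t => q • t) (φ (m ⊗ₜ c))) ∧
    Module.finrank k ((Q ⧸ Subgroup.map (MonoidHom.fst Q P) X) →₀ k) =
      (Subgroup.map (MonoidHom.fst Q P) X).index ∧
    (Subgroup.map (MonoidHom.fst Q P) X ≠ ⊤ →
      ((Subgroup.map (MonoidHom.fst Q P) X).index : k) = 0) := by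
    classical
  set H := Subgroup.map (MonoidHom.fst Q P) X with hHdef
  set φ : ((((Q × P) ⧸ X) →₀ k) ⊗[k] k) →ₗ[k] ((Q ⧸ H) →₀ k) :=
    (Finsupp.lmapDomain k k (qmap X)).comp
      (TensorProduct.rid k (((Q × P) ⧸ X) →₀ k)).toLinearMap with hφdef
  have φ_tmul : ∀ (m : ((Q × P) ⧸ X) →₀ k) (c : k),
      φ (m ⊗ₜ c) = c • Finsupp.mapDomain (qmap X) m := by
    intro m c
    rw [hφdef]
    simp only [LinearMap.comp_apply, LinearEquiv.coe_coe, TensorProduct.rid_tmul,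
      Finsupp.lmapDomain_apply, Finsupp.mapDomain_smul]
  have φ_single : ∀ (u : Q × P) (b c : k),
      φ (Finsupp.single (QuotientGroup.mk u) b ⊗ₜ c) =
        Finsupp.single (QuotientGroup.mk u.1) (c * b) := by
    intro u b c
    rw [φ_tmul, Finsupp.mapDomain_single, qmap_mk, Finsupp.smul_single, smul_eq_mul]
  have key : ∀ (y : P) (m : ((Q × P) ⧸ X) →₀ k),
      Finsupp.mapDomain (qmap X) (σ (op y) m) = Finsupp.mapDomain (qmap X) m := by
    intro y m
    induction m using Finsupp.induction_linear with
    | zero => simp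
    | add f g hf hg => rw [map_add, Finsupp.mapDomain_add, Finsupp.mapDomain_add, hf, hg]
    | single a b =>
      induction a using QuotientGroup.induction_on with
      | H u =>
        have hb : (Finsupp.single (QuotientGroup.mk u : (Q × P) ⧸ X) b)
            = b • Finsupp.single (QuotientGroup.mk u : (Q × P) ⧸ X) (1 : k) := by
          rw [Finsupp.smul_single, smul_eq_mul, mul_one]
        rw [hb, map_smul, Finsupp.mapDomain_smul, Finsupp.mapDomain_smul, hσ,
          Finsupp.mapDomain_single, Finsupp.mapDomain_single, qmap_mk, qmap_mk]
        have h1 : ((1, y⁻¹) * u).1 = u.1 := by simp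
        rw [h1]
  set Rel := balancedRel k P σ (1 : Representation k P k) with hRel
  -- basic generators of the relation submodule
  have memRel : ∀ (y : P) (v : Q × P),
      (Finsupp.single (QuotientGroup.mk ((1, y⁻¹) * v)) (1 : k) ⊗ₜ[k] (1 : k)
        - Finsupp.single (QuotientGroup.mk v) (1 : k) ⊗ₜ[k] (1 : k)) ∈ Rel := by
    intro y v
    apply Submodule.subset_span
    refine ⟨y, Finsupp.single (QuotientGroup.mk v) (1 : k), (1 : k), ?_⟩
    rw [hσ]
    have h1 : ((1 : Representation k P k) y) (1 : k) = 1 := rfl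
    rw [h1, neg_one_smul k (Finsupp.single (QuotientGroup.mk v) (1 : k) ⊗ₜ[k] (1 : k)),
      ← sub_eq_add_neg]
  -- the core: each basis vector is related to the chosen-representative one
  have core : ∀ u : Q × P,
      (Finsupp.single (QuotientGroup.mk u) (1 : k) ⊗ₜ[k] (1 : k)
        - Finsupp.single
            (QuotientGroup.mk ((Quotient.out (QuotientGroup.mk u.1 : Q ⧸ H) : Q), (1 : P)))
            (1 : k) ⊗ₜ[k] (1 : k)) ∈ Rel := by
    intro u
    set r : Q := Quotient.out (QuotientGroup.mk u.1 : Q ⧸ H) with hr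
    have hrq : (QuotientGroup.mk r : Q ⧸ H) = QuotientGroup.mk u.1 := by
      rw [hr]; exact Quotient.out_eq' _
    have hmem : r⁻¹ * u.1 ∈ H := QuotientGroup.eq.mp hrq
    obtain ⟨x, hxX, hx1⟩ := Subgroup.mem_map.mp hmem
    -- (r,1) * x = (u.1, x.2)
    have hcos : (QuotientGroup.mk ((r, (1 : P))) : (Q × P) ⧸ X)
        = QuotientGroup.mk ((u.1, x.2)) := by
      rw [QuotientGroup.eq]
      have : (r, (1 : P))⁻¹ * (u.1, x.2) = x := by
        have hx1' : x.1 = r⁻¹ * u.1 := hx1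
        ext
        · simp [hx1']
        · simp
      rw [this]; exact hxX
    have h1 : (Finsupp.single (QuotientGroup.mk (u.1, (1 : P))) (1 : k) ⊗ₜ[k] (1 : k)
        - Finsupp.single (QuotientGroup.mk u) (1 : k) ⊗ₜ[k] (1 : k)) ∈ Rel := by
      have := memRel u.2 u
      have he : ((1 : Q), u.2⁻¹) * u = (u.1, (1 : P)) := by
        ext <;> simp
      rwa [he] at this
    have h2 : (Finsupp.single (QuotientGroup.mk (u.1, (1 : P))) (1 : k) ⊗ₜ[k] (1 : k)
        - Finsupp.single (QuotientGroup.mk (u.1, x.2)) (1 : k) ⊗ₜ[k] (1 : k)) ∈ Rel := by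
      have := memRel x.2 (u.1, x.2)
      have he : ((1 : Q), x.2⁻¹) * (u.1, x.2) = (u.1, (1 : P)) := by
        ext <;> simp
      rwa [he] at this
    have hsub : (Finsupp.single (QuotientGroup.mk u) (1 : k) ⊗ₜ[k] (1 : k)
        - Finsupp.single (QuotientGroup.mk (u.1, x.2)) (1 : k) ⊗ₜ[k] (1 : k)) ∈ Rel := by
      have hadd := Rel.add_mem h2 (Rel.smul_mem (-1 : k) h1)
      have he2 : Finsupp.single (QuotientGroup.mk u : (Q × P) ⧸ X) (1 : k) ⊗ₜ[k] (1 : k)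
          - Finsupp.single (QuotientGroup.mk (u.1, x.2) : (Q × P) ⧸ X) (1 : k) ⊗ₜ[k] (1 : k)
          = (Finsupp.single (QuotientGroup.mk (u.1, (1 : P)) : (Q × P) ⧸ X) (1 : k) ⊗ₜ[k] (1 : k)
              - Finsupp.single (QuotientGroup.mk (u.1, x.2) : (Q × P) ⧸ X) (1 : k) ⊗ₜ[k] (1 : k))
            + (-1 : k) • (Finsupp.single (QuotientGroup.mk (u.1, (1 : P)) : (Q × P) ⧸ X) (1 : k) ⊗ₜ[k] (1 : k)
              - Finsupp.single (QuotientGroup.mk u : (Q × P) ⧸ X) (1 : k) ⊗ₜ[k] (1 : k)) := by module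
      rw [he2]
      exact hadd
    have hsing : (Finsupp.single (QuotientGroup.mk (r, (1:P)) : (Q × P) ⧸ X) (1 : k))
        = Finsupp.single (QuotientGroup.mk ((u.1, x.2))) (1 : k) := by rw [hcos]
    rw [hsing]
    exact hsub
  -- the section s of φ
  set hh : Q ⧸ H → (((Q × P) ⧸ X) →₀ k) ⊗[k] k :=
    fun c => Finsupp.single
      (QuotientGroup.mk ((Quotient.out c : Q), (1 : P)) : (Q × P) ⧸ X) (1 : k) ⊗ₜ[k] (1 : k)
    with hhdef
  set s : ((Q ⧸ H) →₀ k) →ₗ[k] (((Q × P) ⧸ X) →₀ k) ⊗[k] k :=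
    Finsupp.linearCombination k hh with hsdef
  have s_single : ∀ (c : Q ⧸ H) (b : k), s (Finsupp.single c b) = b • hh c := by
    intro c b
    rw [hsdef, Finsupp.linearCombination_single]
  -- every element is congruent to its normal form modulo Rel
  have key2 : ∀ x : (((Q × P) ⧸ X) →₀ k) ⊗[k] k, x - s (φ x) ∈ Rel := by
    intro x
    induction x using TensorProduct.induction_on with
    | zero => simp [Rel.zero_mem]
    | add a b ha hb =>
      have := Rel.add_mem ha hb
      have he : a + b - s (φ (a + b)) = (a - s (φ a)) + (b - s (φ b)) := by
        rw [map_add, map_add]; module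
      rw [he]; exact this
    | tmul m c =>
      induction m using Finsupp.induction_linear with
      | zero => simp [Rel.zero_mem]
      | add f g hf hg =>
        have := Rel.add_mem hf hg
        have he : (f + g) ⊗ₜ[k] c - s (φ ((f + g) ⊗ₜ[k] c))
            = (f ⊗ₜ[k] c - s (φ (f ⊗ₜ[k] c))) + (g ⊗ₜ[k] c - s (φ (g ⊗ₜ[k] c))) := by
          rw [TensorProduct.add_tmul, map_add, map_add]; module
        rw [he]; exact this
      | single a b =>
        induction a using QuotientGroup.induction_on with
        | H u =>
          rw [φ_single, s_single]
          have ex : (Finsupp.single (QuotientGroup.mk u : (Q × P) ⧸ X) b ⊗ₜ[k] c)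
              = (c * b) • (Finsupp.single (QuotientGroup.mk u : (Q × P) ⧸ X) (1 : k)
                  ⊗ₜ[k] (1 : k)) := by
            have e1 : (Finsupp.single (QuotientGroup.mk u : (Q × P) ⧸ X) (c * b))
                = c • Finsupp.single (QuotientGroup.mk u : (Q × P) ⧸ X) b := by
              rw [Finsupp.smul_single, smul_eq_mul]
            rw [TensorProduct.smul_tmul', Finsupp.smul_single, smul_eq_mul, mul_one, e1,
              TensorProduct.smul_tmul, smul_eq_mul, mul_one]
          rw [ex]
          have e : (c * b) • (Finsupp.single (QuotientGroup.mk u : (Q × P) ⧸ X) (1 : k)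
                ⊗ₜ[k] (1 : k)) - (c * b) • hh (QuotientGroup.mk u.1)
              = (c * b) • (Finsupp.single (QuotientGroup.mk u : (Q × P) ⧸ X) (1 : k)
                ⊗ₜ[k] (1 : k) - hh (QuotientGroup.mk u.1)) := by module
          rw [e]
          exact Rel.smul_mem _ (core u)
  -- φ kills the balancing relations
  have hker2 : Rel ≤ LinearMap.ker φ := by
    rw [hRel, balancedRel]
    rw [Submodule.span_le]
    rintro x ⟨y, m, n, rfl⟩
    simp only [SetLike.mem_coe, LinearMap.mem_ker, map_add, map_smul]
    have h1 : ((1 : Representation k P k) y) n = n := rfl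
    rw [h1, φ_tmul, φ_tmul, key, neg_one_smul k (n • Finsupp.mapDomain (qmap X) m)]
    exact add_neg_cancel _
  have hker : LinearMap.ker φ = Rel := by
    apply le_antisymm
    · intro x hx
      rw [LinearMap.mem_ker] at hx
      have h := key2 x
      rw [hx, LinearMap.map_zero s] at h
      have h2 := sub_zero (G := (((Q × P) ⧸ X) →₀ k) ⊗[k] k) x
      rwa [h2] at h
    · exact hker2
  -- surjectivity
  have hsurj : Function.Surjective φ := by
    intro t
    induction t using Finsupp.induction_linear with
    | zero =>
      refine ⟨(0 : (((Q × P) ⧸ X) →₀ k)) ⊗ₜ[k] (0 : k), ?_⟩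
      rw [TensorProduct.zero_tmul, LinearMap.map_zero φ]
    | add f g hf hg =>
      obtain ⟨x, hx⟩ := hf; obtain ⟨y, hy⟩ := hg
      exact ⟨x + y, by rw [map_add, hx, hy]⟩
    | single a b =>
      induction a using QuotientGroup.induction_on with
      | H q =>
        refine ⟨Finsupp.single (QuotientGroup.mk (q, (1 : P)) : (Q × P) ⧸ X) b ⊗ₜ[k] (1 : k), ?_⟩
        rw [φ_single, one_mul]
  -- equivariance
  have hequiv : ∀ (q : Q) (m : ((Q × P) ⧸ X) →₀ k) (c : k),
      φ ((((Representation.ofMulAction k (Q × P) ((Q × P) ⧸ X)).comp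
          (MonoidHom.inl Q P)) q (MonoidAlgebra.ofCoeff m)).coeff ⊗ₜ c) =
        Finsupp.mapDomain (fun t => q • t) (φ (m ⊗ₜ c)) := by
    intro q m c
    induction m using Finsupp.induction_linear with
    | zero => simp
    | add f g hf hg =>
      rw [MonoidAlgebra.ofCoeff_add, map_add, MonoidAlgebra.coeff_add, TensorProduct.add_tmul, map_add, hf, hg, TensorProduct.add_tmul, map_add,
        Finsupp.mapDomain_add]
    | single a b =>
      induction a using QuotientGroup.induction_on with
      | H u =>
        rw [φ_single, Finsupp.mapDomain_single]
        have h1 : (((Representation.ofMulAction k (Q × P) ((Q × P) ⧸ X)).comp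
            (MonoidHom.inl Q P)) q (MonoidAlgebra.ofCoeff (Finsupp.single (QuotientGroup.mk u) b))).coeff
            = Finsupp.single (QuotientGroup.mk ((q, (1 : P)) * u)) b := by
          rw [MonoidHom.comp_apply, MonoidHom.inl_apply]
          rw [MonoidAlgebra.ofCoeff_single, Representation.ofMulAction_single]
          rfl
        rw [h1, φ_single]
        have h2 : (QuotientGroup.mk (((q, (1 : P)) * u).1) : Q ⧸ H)
            = q • (QuotientGroup.mk u.1 : Q ⧸ H) := rfl
        rw [h2]
  refine ⟨⟨φ, hker, hsurj, hequiv⟩, ?_, ?_⟩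
  · haveI : Fintype (Q ⧸ H) := Fintype.ofFinite _
    rw [Module.finrank_finsupp_self, Subgroup.index, Nat.card_eq_fintype_card]
  · intro hne
    haveI : Fact p.Prime := ⟨hp⟩
    obtain ⟨n, hn⟩ := IsPGroup.iff_card.mp hQ
    have hdvd : H.index ∣ p ^ n := hn ▸ Subgroup.index_dvd_card (G := Q) H
    obtain ⟨m, _, heq⟩ := (Nat.dvd_prime_pow hp).mp hdvd
    have hm0 : m ≠ 0 := by
      intro h0
      rw [h0, pow_zero] at heq
      exact hne (Subgroup.index_eq_one.mp heq)
    have hpdvd : p ∣ H.index := heq ▸ dvd_pow_self p hm0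
    exact (CharP.cast_eq_zero_iff k p _).mpr hpdvd
end

section
/- Let p be a prime, G a finite group, R a p-subgroup of G, and xR a p-regular element of the quotient group RC_G(R)/R. Then xR has defect zero in RC_G(R)/R (i.e., the centralizer of xR in RC_G(R)/R is a p'-group) if and only if there exists a p-regular element y ∈ C_G(R) with y ∈ xR such that R is a Sylow p-subgroup of RC_G(R,y), where C_G(R,y) = C_G(R) ∩ C_G(y). -/
section Aux

variable {G : Type} [Group G]

/-- Decomposition of elements of `R ⊔ C_G(R)` as products. -/
lemma mem_sup_centralizer_decomp {R : Subgroup G} {g : G}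
    (hg : g ∈ R ⊔ Subgroup.centralizer (R : Set G)) :
    ∃ a ∈ R, ∃ c ∈ Subgroup.centralizer (R : Set G), g = a * c := by
  set C := Subgroup.centralizer (R : Set G) with hC
  have hsup : R ⊔ C = Subgroup.closure ((R : Set G) ∪ (C : Set G)) := by
    rw [Subgroup.closure_union, Subgroup.closure_eq, Subgroup.closure_eq]
  rw [hsup] at hg
  refine Subgroup.closure_induction ?_ ?_ ?_ ?_ hg
  · rintro x (hx | hx)
    · exact ⟨x, hx, 1, one_mem _, (mul_one x).symm⟩
    · exact ⟨1, one_mem _, x, hx, (one_mul x).symm⟩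
  · exact ⟨1, one_mem _, 1, one_mem _, (one_mul 1).symm⟩
  · rintro x y hx hy ⟨a, ha, c, hc, rfl⟩ ⟨a', ha', c', hc', rfl⟩
    refine ⟨a * a', mul_mem ha ha', c * c', mul_mem hc hc', ?_⟩
    have h1 : c * a' = a' * c := (Subgroup.mem_centralizer_iff.mp hc a' ha').symm
    calc a * c * (a' * c') = a * (c * a') * c' := by group
      _ = a * (a' * c) * c' := by rw [h1]
      _ = a * a' * (c * c') := by group
  · rintro x hx ⟨a, ha, c, hc, rfl⟩
    refine ⟨a⁻¹, inv_mem ha, c⁻¹, inv_mem hc, ?_⟩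
    have h1 : a * c = c * a := Subgroup.mem_centralizer_iff.mp hc a ha
    rw [mul_inv_rev]
    rw [← mul_inv_rev, ← mul_inv_rev, h1]

end Aux

/-- Key counting lemma: for `y ∈ C_G(R)` of order prime to `p`, the centralizer of
`yR` in `(R C_G(R))/R` has order `[R(C_G(R) ∩ C_G(y)) : R]`. -/
lemma card_centralizer_eq {p : ℕ} (hp : p.Prime) {G : Type} [Group G] [Finite G]
    (R C M : Subgroup G) (hR : IsPGroup p R)
    (hC : C = Subgroup.centralizer (R : Set G)) (hM : M = R ⊔ C)
    [hN : (R.subgroupOf M).Normal]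
    (y : M) (hyC : (y : G) ∈ C)
    (hy : (orderOf (y : G)).Coprime p) :
    Nat.card (Subgroup.centralizer
        {(QuotientGroup.mk y : M ⧸ R.subgroupOf M)}) =
      (R.subgroupOf (R ⊔ (C ⊓ Subgroup.centralizer {(y : G)}))).index := by
  set D : Subgroup G := C ⊓ Subgroup.centralizer {(y : G)} with hD
  set H : Subgroup G := R ⊔ D with hH
  have hRM : R ≤ M := hM ▸ le_sup_left
  have hCM : C ≤ M := hM ▸ le_sup_right
  have hDM : D ≤ M := le_trans inf_le_left hCM
  have hHM : H ≤ M := sup_le hRM hDM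
  have hRH : R ≤ H := le_sup_left
  have hyC' : (y : G) ∈ Subgroup.centralizer (R : Set G) := hC ▸ hyC
  set K : Subgroup M := R.subgroupOf M with hK
  set π : M →* M ⧸ K := QuotientGroup.mk' K with hπ
  set ξ : M ⧸ K := QuotientGroup.mk y with hξ
  set S : Subgroup (M ⧸ K) := Subgroup.centralizer {ξ} with hS
  -- comap of the centralizer is H ∩ M
  have hcomap : S.comap π = H.subgroupOf M := by
    apply le_antisymm
    · intro m hm
      have hcom : ξ * π m = π m * ξ :=
        Subgroup.mem_centralizer_iff.mp hm ξ rfl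
      have hmk : (QuotientGroup.mk (y * m) : M ⧸ K) = QuotientGroup.mk (m * y) := by
        simpa [hπ, QuotientGroup.mk'_apply] using hcom
      have hker : (y * m)⁻¹ * (m * y) ∈ K := (QuotientGroup.eq).mp hmk
      have ht : ((m⁻¹ * y⁻¹ * m * y : M) : G) ∈ R := by
        have := hker
        rw [Subgroup.mem_subgroupOf] at this
        simpa [mul_assoc] using this
      have ht' : ((y : G))⁻¹ * ((m : G) * (y : G) * ((m : G))⁻¹) ∈ R := by
        have hmem : (m⁻¹ * y⁻¹ * m * y : M) ∈ R.subgroupOf M := by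
          rw [Subgroup.mem_subgroupOf]; exact ht
        have h3 := hN.conj_mem _ hmem m
        rw [Subgroup.mem_subgroupOf] at h3
        have h2 : (m * (m⁻¹ * y⁻¹ * m * y) * m⁻¹ : M) = y⁻¹ * (m * y * m⁻¹) := by group
        rw [h2] at h3
        simpa [mul_assoc] using h3
      obtain ⟨u, hu⟩ : ∃ u : G, u = ((y : G))⁻¹ * ((m : G) * (y : G) * ((m : G))⁻¹) :=
        ⟨_, rfl⟩
      have huR : u ∈ R := hu ▸ ht'
      have hyu : (m : G) * (y : G) * ((m : G))⁻¹ = (y : G) * u := by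
        rw [hu]; group
      -- u = 1 by order considerations
      have hcommYu : Commute (y : G) u :=
        (Subgroup.mem_centralizer_iff.mp hyC' u huR).symm
      have hordu : ∃ k : ℕ, u ^ p ^ k = 1 := by
        obtain ⟨k, hk⟩ := hR ⟨u, huR⟩
        exact ⟨k, by simpa [← Subgroup.coe_pow, Subgroup.coe_one] using congrArg Subtype.val hk⟩
      obtain ⟨k, hk⟩ := hordu
      have hordudvd : orderOf u ∣ p ^ k := orderOf_dvd_of_pow_eq_one hk
      have hcop : (orderOf (y : G)).Coprime (orderOf u) :=
        Nat.Coprime.coprime_dvd_right hordudvd (hy.pow_right k)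
      have hordeq : orderOf ((y : G) * u) = orderOf (y : G) * orderOf u :=
        Commute.orderOf_mul_eq_mul_orderOf_of_coprime hcommYu hcop
      have hsemi : SemiconjBy (m : G) (y : G) ((y : G) * u) := by
        unfold SemiconjBy
        rw [← hyu]; group
      have hordconj : orderOf (y : G) = orderOf ((y : G) * u) := SemiconjBy.orderOf_eq _ hsemi
      have hordY : 0 < orderOf (y : G) := orderOf_pos _
      have hord1 : orderOf u = 1 := by
        have : orderOf (y : G) * 1 = orderOf (y : G) * orderOf u := by
          rw [mul_one, ← hordeq, ← hordconj]
        exact (Nat.eq_of_mul_eq_mul_left hordY this).symm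
      have hu1 : u = 1 := orderOf_eq_one_iff.mp hord1
      have hmy : (m : G) * (y : G) * ((m : G))⁻¹ = (y : G) := by rw [hyu, hu1, mul_one]
      -- decompose m = a * c and show m ∈ H
      have hmM : (m : G) ∈ R ⊔ Subgroup.centralizer (R : Set G) := by
        have hMC : ∀ g : G, g ∈ M → g ∈ R ⊔ Subgroup.centralizer (R : Set G) := by
          rw [hM, hC]; exact fun g h => h
        exact hMC _ m.2
      obtain ⟨a, haR, c, hcC, hg⟩ := mem_sup_centralizer_decomp (R := R) hmM
      have hcY : c ∈ Subgroup.centralizer {(y : G)} := by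
        rw [Subgroup.mem_centralizer_iff]
        rintro h rfl
        have hac : c = a⁻¹ * (m : G) := by rw [hg]; group
        have hay : (y : G) * a = a * (y : G) :=
          (Subgroup.mem_centralizer_iff.mp hyC' a haR).symm
        rw [hac]
        calc (y : G) * (a⁻¹ * (m : G)) = a⁻¹ * (a * (y:G) * a⁻¹) * (m : G) := by group
          _ = a⁻¹ * ((y:G) * a * a⁻¹) * (m : G) := by rw [hay]
          _ = a⁻¹ * (y:G) * (m : G) := by group
          _ = a⁻¹ * ((m:G) * (y:G) * (m:G)⁻¹) * (m:G) := by rw [hmy]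
          _ = a⁻¹ * (m : G) * (y : G) := by group
      rw [Subgroup.mem_subgroupOf, hg]
      exact mul_mem (hRH haR) (le_sup_right (α := Subgroup G) ⟨hC ▸ hcC, hcY⟩)
    · -- H ∩ M ≤ comap
      have hsplit : H.subgroupOf M = R.subgroupOf M ⊔ D.subgroupOf M := by
        rw [hH, Subgroup.subgroupOf_sup hRM hDM]
      rw [hsplit]
      refine sup_le ?_ ?_
      · intro r hr
        have : π r = 1 := by
          rw [hπ, QuotientGroup.mk'_apply, QuotientGroup.eq_one_iff]
          exact hr
        rw [Subgroup.mem_comap, this]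
        exact one_mem S
      · intro d hd
        rw [Subgroup.mem_comap]
        rw [hS, Subgroup.mem_centralizer_iff]
        rintro h rfl
        have hdY : (y : G) * (d : G) = (d : G) * (y : G) := by
          have : (d : G) ∈ Subgroup.centralizer {(y : G)} := (hd : (d:G) ∈ D).2
          exact Subgroup.mem_centralizer_iff.mp this (y : G) rfl
        have hyd : y * d = d * y := Subtype.ext hdY
        show ξ * π d = π d * ξ
        rw [hξ, hπ, QuotientGroup.mk'_apply, ← QuotientGroup.mk_mul, ← QuotientGroup.mk_mul, hyd]
  -- now counting
  have hsurj : Function.Surjective π := QuotientGroup.mk'_surjective K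
  have hSindex : S.index = (H.subgroupOf M).index := by
    rw [← Subgroup.index_comap_of_surjective S hsurj, hcomap]
  have hcardQ : Nat.card (M ⧸ K) = K.index := (Subgroup.index_eq_card K).symm
  have hcardQ2 : Nat.card (M ⧸ K) = S.index * Nat.card S := by
    rw [Subgroup.card_eq_card_quotient_mul_card_subgroup S, Subgroup.index_eq_card]
  have hchain : (R.subgroupOf H).index * (H.subgroupOf M).index = K.index := by
    have := Subgroup.relIndex_mul_relIndex R H M hRH hHM
    simpa [Subgroup.relIndex] using this
  have hHMpos : (H.subgroupOf M).index ≠ 0 := Subgroup.index_ne_zero_of_finite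
  have hmain : (H.subgroupOf M).index * Nat.card S
      = (H.subgroupOf M).index * (R.subgroupOf H).index := by
    rw [← hSindex, ← hcardQ2, hcardQ, ← hchain, hSindex]
    ring
  exact Nat.eq_of_mul_eq_mul_left (Nat.pos_of_ne_zero hHMpos) hmain

/-- Every `p`-regular element of `(R C_G(R))/R` lifts to a `p`-regular element of `C_G(R)`. -/
lemma exists_regular_lift {p : ℕ} (hp : p.Prime) {G : Type} [Group G] [Finite G]
    (R C M : Subgroup G) (hR : IsPGroup p R)
    (hC : C = Subgroup.centralizer (R : Set G)) (hM : M = R ⊔ C)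
    [hN : (R.subgroupOf M).Normal]
    (ξ : M ⧸ R.subgroupOf M) (hξ : (orderOf ξ).Coprime p) :
    ∃ y : M, (y : G) ∈ C ∧ (orderOf (y : G)).Coprime p ∧ QuotientGroup.mk y = ξ := by
  have hRM : R ≤ M := hM ▸ le_sup_left
  have hMC : ∀ g : G, g ∈ M → g ∈ R ⊔ Subgroup.centralizer (R : Set G) := by
    rw [hM, hC]; exact fun g h => h
  obtain ⟨x, hx⟩ := QuotientGroup.mk_surjective ξ
  -- the p'-part of x
  set n : ℕ := orderOf x with hn
  have hnpos : 0 < n := orderOf_pos x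
  set q : ℕ := p ^ n.factorization p with hq
  have hqdvd : q ∣ n := Nat.ordProj_dvd n p
  set t : ℕ := Nat.totient (orderOf ξ) with ht
  have htpos : 0 < t := Nat.totient_pos.mpr (orderOf_pos ξ)
  set y : M := x ^ (q ^ t) with hy
  have hcopq : Nat.Coprime q (orderOf ξ) := Nat.Coprime.pow_left _ hξ.symm
  -- y maps to ξ
  have hmk : QuotientGroup.mk y = ξ := by
    have h1 : (QuotientGroup.mk y : M ⧸ R.subgroupOf M) = ξ ^ (q ^ t) := by
      rw [hy, ← hx]
      exact QuotientGroup.mk_pow _ x (q ^ t)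
    have h2 : ξ ^ (q ^ t) = ξ ^ 1 := by
      rw [pow_eq_pow_iff_modEq]
      exact Nat.ModEq.pow_totient hcopq
    rw [h1, h2, pow_one]
  -- y has order prime to p
  have hordxq : orderOf (x ^ q) = n / q := by
    rw [orderOf_pow, ← hn, Nat.gcd_comm, Nat.gcd_eq_left hqdvd]
  have hydvd : orderOf y ∣ n / q := by
    have hqt : q ^ t = q * q ^ (t - 1) := by
      conv_lhs => rw [← Nat.succ_pred_eq_of_pos htpos]
      rw [pow_succ']
      rfl
    have h3 : y = (x ^ q) ^ (q ^ (t - 1)) := by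
      rw [hy, hqt, pow_mul]
    rw [h3, ← hordxq]
    exact orderOf_pow_dvd _
  have hcopm : Nat.Coprime p (n / q) := Nat.coprime_ordCompl hp hnpos.ne'
  have hordy : (orderOf y).Coprime p :=
    Nat.Coprime.coprime_dvd_left hydvd hcopm.symm
  have hordyG : orderOf (y : G) = orderOf y :=
    orderOf_injective M.subtype M.subtype_injective y
  -- the quotient M / (C ∩ M) is a p-group, so y ∈ C
  haveI hnormC : (C.subgroupOf M).Normal := by
    have hMnorm : M ≤ Subgroup.normalizer (R : Set G) := Subgroup.le_normalizer_of_normal_subgroupOf hRM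
    constructor
    intro c hc m
    rw [Subgroup.mem_subgroupOf] at hc ⊢
    rw [hC] at hc ⊢
    rw [Subgroup.mem_centralizer_iff]
    intro a haR
    have hminv : ((m : G))⁻¹ ∈ Subgroup.normalizer (R : Set G) := inv_mem (hMnorm m.2)
    have haconj : ((m : G))⁻¹ * a * (m : G) ∈ R := by
      have := (Subgroup.mem_normalizer_iff.mp hminv a).mp haR
      simpa using this
    have hcomm : (((m : G))⁻¹ * a * (m : G)) * (c : G) = (c : G) * (((m : G))⁻¹ * a * (m : G)) :=
      Subgroup.mem_centralizer_iff.mp hc _ haconj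
    push_cast
    calc a * ((m : G) * (c : G) * ((m : G))⁻¹)
        = (m : G) * ((((m : G))⁻¹ * a * (m : G)) * (c : G)) * ((m : G))⁻¹ := by group
      _ = (m : G) * ((c : G) * (((m : G))⁻¹ * a * (m : G))) * ((m : G))⁻¹ := by rw [hcomm]
      _ = (m : G) * (c : G) * ((m : G))⁻¹ * a := by group
  have hPQ : IsPGroup p (M ⧸ C.subgroupOf M) := by
    intro z
    induction z using QuotientGroup.induction_on with
    | H z =>
      obtain ⟨a, haR, c, hcC, hg⟩ := mem_sup_centralizer_decomp (R := R) (hMC _ z.2)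
      obtain ⟨k, hk⟩ := hR ⟨a, haR⟩
      have ha1 : a ^ p ^ k = 1 := by
        simpa [← Subgroup.coe_pow, Subgroup.coe_one] using congrArg Subtype.val hk
      refine ⟨k, ?_⟩
      rw [← QuotientGroup.mk_pow, QuotientGroup.eq_one_iff, Subgroup.mem_subgroupOf]
      have hcomm : Commute a c := Subgroup.mem_centralizer_iff.mp hcC a haR
      have : ((z ^ p ^ k : M) : G) = c ^ p ^ k := by
        push_cast
        rw [hg, hcomm.mul_pow, ha1, one_mul]
      rw [this, hC]
      exact pow_mem hcC _
  have hyC : (y : G) ∈ C := by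
    set φ : M →* M ⧸ C.subgroupOf M := QuotientGroup.mk' (C.subgroupOf M) with hφ
    have hd1 : orderOf (φ y) ∣ orderOf y := orderOf_map_dvd φ y
    obtain ⟨k, hk⟩ := hPQ (φ y)
    have hd2 : orderOf (φ y) ∣ p ^ k := orderOf_dvd_of_pow_eq_one hk
    have hcop : (orderOf y).Coprime (p ^ k) := hordy.pow_right k
    have h1 : orderOf (φ y) ∣ 1 := by
      rw [← hcop.gcd_eq_one]
      exact Nat.dvd_gcd hd1 hd2
    have : φ y = 1 := orderOf_eq_one_iff.mp (Nat.dvd_one.mp h1)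
    rw [hφ, QuotientGroup.mk'_apply, QuotientGroup.eq_one_iff, Subgroup.mem_subgroupOf] at this
    exact this
  exact ⟨y, hyC, hordyG ▸ hordy, hmk⟩

theorem stmt6 (p : ℕ) (hp : p.Prime) (G : Type) [Group G] [Finite G]
    (R : Subgroup G) (hR : IsPGroup p R)
    (M : Subgroup G) (hM : M = R ⊔ Subgroup.centralizer (R : Set G))
    [hN : (R.subgroupOf M).Normal]
    (ξ : M ⧸ R.subgroupOf M) (hξ : (orderOf ξ).Coprime p) :
    (¬ p ∣ Nat.card (Subgroup.centralizer {ξ})) ↔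
      ∃ y : M, (y : G) ∈ Subgroup.centralizer (R : Set G) ∧
        (orderOf (y : G)).Coprime p ∧
        QuotientGroup.mk y = ξ ∧
        ¬ p ∣ (R.subgroupOf (R ⊔ (Subgroup.centralizer (R : Set G) ⊓
            Subgroup.centralizer {(y : G)}))).index := by
  subst hM
  constructor
  · intro h
    obtain ⟨y, hyC, hy, hmk⟩ :=
      exists_regular_lift hp R (Subgroup.centralizer (R : Set G)) _ hR rfl rfl ξ hξ
    refine ⟨y, hyC, hy, hmk, ?_⟩
    rw [← card_centralizer_eq hp R (Subgroup.centralizer (R : Set G)) _ hR rfl rfl y hyC hy, hmk]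
    exact h
  · rintro ⟨y, hyC, hy, hmk, h⟩
    rw [← hmk,
      card_centralizer_eq hp R (Subgroup.centralizer (R : Set G)) _ hR rfl rfl y hyC hy]
    exact h
end

section
/- Let p be a prime, G a finite group, R a p-subgroup of G, and y a p-regular element of C_G(R). Then the stabilizer in N_G(R) of the RC_G(R)-conjugacy class of yR in RC_G(R)/R (under the conjugation action of N_G(R)) equals RC_G(R)·N_G(R,y), where N_G(R,y) = N_G(R) ∩ C_G(y). -/
/-- For a `p`-subgroup `R ≤ G` and a `p`-regular `y ∈ C_G(R)`, the stabilizer in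
`N_G(R)` of the `R·C_G(R)`-conjugacy class of `yR` in `R·C_G(R)/R` equals
`R·C_G(R) · N_G(R,y)` where `N_G(R,y) = N_G(R) ∩ C_G(y)`.  (An element `g ∈ N_G(R)` stabilizes
the class of `yR` iff `g·y·g⁻¹ ∈ (c·y·c⁻¹)·R` for some `c ∈ R·C_G(R)`.) -/
theorem stmt7 (p : ℕ) (hp : p.Prime) (G : Type) [Group G] [Finite G]
    (R : Subgroup G) (hR : IsPGroup p R)
    (y : G) (hy : y ∈ Subgroup.centralizer (R : Set G))
    (hyreg : (orderOf y).Coprime p) :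
    ∀ g : G,
      (g ∈ Subgroup.normalizer (R : Set G) ∧
        ∃ c ∈ R ⊔ Subgroup.centralizer (R : Set G), ∃ r ∈ R,
          g * y * g⁻¹ = (c * y * c⁻¹) * r) ↔
      (∃ m ∈ R ⊔ Subgroup.centralizer (R : Set G),
        ∃ n, n ∈ Subgroup.normalizer (R : Set G) ∧ n ∈ Subgroup.centralizer {y} ∧ g = m * n) := by
  have hcent_le : Subgroup.centralizer (R : Set G) ≤ Subgroup.normalizer (R : Set G) := by
    intro x hx
    rw [Subgroup.mem_normalizer_iff]
    intro h
    constructor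
    · intro hh
      have e : x * h * x⁻¹ = h := by rw [← hx h hh]; group
      rwa [e]
    · intro hh
      have e := hx _ hh
      have e3 : h = x * h * x⁻¹ := by
        have h2 := congrArg (fun z => x⁻¹ * z) e
        simpa [mul_assoc] using h2
      rw [e3]
      exact hh
  have hsup : R ⊔ Subgroup.centralizer (R : Set G) ≤ Subgroup.normalizer (R : Set G) :=
    sup_le Subgroup.le_normalizer hcent_le
  intro g
  constructor
  · rintro ⟨hg, c, hc, r, hr, heq⟩
    have hcN : c ∈ Subgroup.normalizer (R : Set G) := hsup hc
    set n := c⁻¹ * g with hn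
    have hnN : n ∈ Subgroup.normalizer (R : Set G) := mul_mem (inv_mem hcN) hg
    set r' := c⁻¹ * r * c with hr'def
    have hr' : r' ∈ R := by
      have := ((Subgroup.mem_normalizer_iff.mp (inv_mem hcN)) r).mp hr
      simpa [hr'def] using this
    have hconj : n * y * n⁻¹ = y * r' := by
      have : c⁻¹ * (g * y * g⁻¹) * c = c⁻¹ * ((c * y * c⁻¹) * r) * c := by rw [heq]
      calc n * y * n⁻¹ = c⁻¹ * (g * y * g⁻¹) * c := by rw [hn]; group
        _ = c⁻¹ * ((c * y * c⁻¹) * r) * c := this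
        _ = y * r' := by rw [hr'def]; group
    have hcomm : Commute y r' := (hy r' hr').symm
    -- orders
    obtain ⟨k, hk⟩ := hR ⟨r', hr'⟩
    have hkG : r' ^ p ^ k = 1 := by
      have := congrArg (Subtype.val) hk
      simpa using this
    have hdvd : orderOf r' ∣ p ^ k := orderOf_dvd_of_pow_eq_one hkG
    have hcop : (orderOf y).Coprime (orderOf r') :=
      Nat.Coprime.coprime_dvd_right hdvd (hyreg.pow_right k)
    have horder : orderOf (y * r') = orderOf y * orderOf r' :=
      hcomm.orderOf_mul_eq_mul_orderOf_of_coprime hcop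
    have hconjord : orderOf (n * y * n⁻¹) = orderOf y := by
      have := orderOf_injective (MulAut.conj n).toMonoidHom (MulEquiv.injective _) y
      simpa [MulAut.conj] using this
    have hy1 : orderOf y = orderOf y * orderOf r' := by
      rw [← horder, ← hconj, hconjord]
    have hr1 : orderOf r' = 1 := by
      have hpos : 0 < orderOf y := orderOf_pos y
      nlinarith [hy1, hpos]
    have hr'1 : r' = 1 := orderOf_eq_one_iff.mp hr1
    have hnc : n ∈ Subgroup.centralizer ({y} : Set G) := by
      rw [Subgroup.mem_centralizer_iff]
      rintro z hz
      rw [Set.mem_singleton_iff] at hz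
      rw [hz]
      have : n * y * n⁻¹ = y := by rw [hconj, hr'1, mul_one]
      calc y * n = (n * y * n⁻¹) * n := by rw [this]
        _ = n * y := by group
    exact ⟨c, hc, n, hnN, hnc, by rw [hn]; group⟩
  · rintro ⟨m, hm, n, hnN, hnC, rfl⟩
    have hyn : y * n = n * y := Subgroup.mem_centralizer_iff.mp hnC y rfl
    refine ⟨mul_mem (hsup hm) hnN, m, hm, 1, one_mem R, ?_⟩
    calc m * n * y * (m * n)⁻¹ = m * (n * y) * n⁻¹ * m⁻¹ := by group
      _ = m * (y * n) * n⁻¹ * m⁻¹ := by rw [hyn]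
      _ = m * y * m⁻¹ * 1 := by group
end

section
/- Let p be a prime, G a finite group, R a p-subgroup, y ∈ C_G(R) a p-regular element, and c ∈ RC_G(R), r ∈ R, g ∈ G such that g·y·g⁻¹ = (c·y·c⁻¹)·r. Then r = 1 and g·y·g⁻¹ = c·y·c⁻¹. -/
/-- If `y` is a `p`-regular element of `C_G(R)`, `c ∈ R·C_G(R)`, `r ∈ R` and
`g·y·g⁻¹ = (c·y·c⁻¹)·r`, then `r = 1` and `g·y·g⁻¹ = c·y·c⁻¹`. -/
theorem stmt8 (p : ℕ) (hp : p.Prime) (G : Type) [Group G] [Finite G]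
    (R : Subgroup G) (hR : IsPGroup p R)
    (y : G) (hy : y ∈ Subgroup.centralizer (R : Set G))
    (hyreg : (orderOf y).Coprime p)
    (c r g : G) (hc : c ∈ R ⊔ Subgroup.centralizer (R : Set G)) (hr : r ∈ R)
    (h : g * y * g⁻¹ = (c * y * c⁻¹) * r) :
    r = 1 ∧ g * y * g⁻¹ = c * y * c⁻¹ := by
  set C := Subgroup.centralizer (R : Set G) with hC
  -- R ⊔ C normalizes C
  have hnorm : R ⊔ C ≤ Subgroup.normalizer (C : Set G) := by
    refine sup_le ?_ Subgroup.le_normalizer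
    intro x hx
    rw [Subgroup.mem_normalizer_iff]
    intro z
    constructor
    · intro hz
      rw [Subgroup.mem_centralizer_iff]
      intro w hw
      have hw' : x⁻¹ * w * x ∈ R := by
        have := Subgroup.mul_mem R (Subgroup.mul_mem R (Subgroup.inv_mem R hx) hw) hx
        simpa using this
      have := (Subgroup.mem_centralizer_iff.mp hz) _ hw'
      calc w * (x * z * x⁻¹) = x * (x⁻¹ * w * x * z) * x⁻¹ := by group
        _ = x * (z * (x⁻¹ * w * x)) * x⁻¹ := by rw [this]
        _ = x * z * x⁻¹ * w := by group
    · intro hz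
      rw [Subgroup.mem_centralizer_iff]
      intro w hw
      have hw' : x * w * x⁻¹ ∈ R := by
        exact Subgroup.mul_mem R (Subgroup.mul_mem R hx hw) (Subgroup.inv_mem R hx)
      have := (Subgroup.mem_centralizer_iff.mp hz) _ hw'
      calc w * z = x⁻¹ * ((x * w * x⁻¹) * (x * z * x⁻¹)) * x := by group
        _ = x⁻¹ * ((x * z * x⁻¹) * (x * w * x⁻¹)) * x := by rw [this]
        _ = z * w := by group
  have ha : c * y * c⁻¹ ∈ C :=
    ((Subgroup.mem_normalizer_iff.mp (hnorm hc)) y).mp hy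
  have hcomm : Commute (c * y * c⁻¹) r :=
    ((Subgroup.mem_centralizer_iff.mp ha) r hr).symm
  obtain ⟨k, hk⟩ := hR ⟨r, hr⟩
  have hrk : r ^ p ^ k = 1 := by
    have := congrArg (Subgroup.subtype R) hk
    simpa using this
  have hrdvd : orderOf r ∣ p ^ k := orderOf_dvd_of_pow_eq_one hrk
  have hsc : SemiconjBy c y (c * y * c⁻¹) := by
    unfold SemiconjBy; group
  have hoa : orderOf (c * y * c⁻¹) = orderOf y := (hsc.orderOf_eq c).symm
  have hcop : (orderOf (c * y * c⁻¹)).Coprime (orderOf r) := by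
    rw [hoa]
    exact (hyreg.pow_right k).coprime_dvd_right hrdvd
  have hmul : orderOf (g * y * g⁻¹) = orderOf (c * y * c⁻¹) * orderOf r := by
    rw [h]
    exact hcomm.orderOf_mul_eq_mul_orderOf_of_coprime hcop
  have hsg : SemiconjBy g y (g * y * g⁻¹) := by
    unfold SemiconjBy; group
  have hog : orderOf (g * y * g⁻¹) = orderOf y := (hsg.orderOf_eq g).symm
  have hone : orderOf r = 1 := by
    have hpos : 0 < orderOf y := orderOf_pos y
    have heq : orderOf y * 1 = orderOf y * orderOf r := by
      rw [mul_one]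
      conv_lhs => rw [← hog, hmul, hoa]
    exact (Nat.eq_of_mul_eq_mul_left hpos heq).symm
  have hr1 : r = 1 := orderOf_eq_one_iff.mp hone
  exact ⟨hr1, by rw [h, hr1, mul_one]⟩
end

section
/- Let (K, O, k) be a p-modular system with K big enough for the finite group G, and let x be a p-regular element of G of defect zero (C_G(x) a p'-group). Let v_x = Ind_{⟨x⟩}^G(|x|·1_x), where 1_x : ⟨x⟩ → O is the class function with value 1 at x and 0 elsewhere, so that |x|·1_x = Σ_ζ ζ(x⁻¹)ζ over the characters ζ of ⟨x⟩, is a virtual projective character. Then the modular character of v_x satisfies Φ_{v_x}(g) = |C_G(x)| if g is G-conjugate to x, and Φ_{v_x}(g) = 0 for all other p-regular g. -/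
/-- Let `x` be a `p`-regular element of defect zero of the finite group `G`
(its centralizer is a `p'`-group).  Let `v_x = Ind_{⟨x⟩}^G (|x|·1_x)`, the virtual projective
character induced from the class function on `⟨x⟩` with value `|x|` at `x` and `0` elsewhere.
Its (modular) character, given by the induction formula
`Φ_{v_x}(g) = (1/|x|) · Σ_{h ∈ G} f(h⁻¹gh)` with `f(t) = |x|` if `t = x` and `0` otherwise,
satisfies `Φ_{v_x}(g) = |C_G(x)|` if `g` is `G`-conjugate to `x`, and `Φ_{v_x}(g) = 0` for all
other `p`-regular `g`. -/
theorem stmt10 (p : ℕ) (hp : p.Prime) (G : Type) [Group G] [Fintype G] [DecidableEq G]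
    (K : Type) [Field K] [CharZero K]
    (x : G) (hxreg : (orderOf x).Coprime p)
    (hxdef : ¬ p ∣ Nat.card ↥(Subgroup.centralizer {x}))
    (f : G → K) (hf : ∀ t : G, f t = if t = x then (orderOf x : K) else 0)
    (Φ : G → K)
    (hΦ : ∀ g : G, Φ g = (orderOf x : K)⁻¹ * ∑ h : G, f (h⁻¹ * g * h)) :
    ∀ g : G, (orderOf g).Coprime p →
      (IsConj x g → Φ g = (Nat.card ↥(Subgroup.centralizer {x}) : K)) ∧
      (¬ IsConj x g → Φ g = 0) := by
  intro g hgreg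
  have hn : (orderOf x : K) ≠ 0 := by
    exact_mod_cast (orderOf_pos x).ne'
  constructor
  · intro hconj
    obtain ⟨c, hc⟩ := isConj_iff.mp hconj
    have hg' : g = c * x * c⁻¹ := hc.symm
    subst hg'
    rw [hΦ]
    simp_rw [hf]
    rw [← Finset.sum_filter, Finset.sum_const, nsmul_eq_mul]
    have key : ∀ h : G, (h⁻¹ * (c * x * c⁻¹) * h = x) ↔ x * (c⁻¹ * h) = (c⁻¹ * h) * x := by
      intro h
      have e : h⁻¹ * (c * x * c⁻¹) * h = (c⁻¹ * h)⁻¹ * x * (c⁻¹ * h) := by group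
      rw [e, mul_assoc, inv_mul_eq_iff_eq_mul]
    have hcard : (Finset.univ.filter (fun h : G => h⁻¹ * (c * x * c⁻¹) * h = x)).card
        = Nat.card ↥(Subgroup.centralizer {x}) := by
      have e1 : (Finset.univ.filter (fun h : G => h⁻¹ * (c * x * c⁻¹) * h = x))
          = (Finset.univ.filter (fun h : G => x * h = h * x)).image (fun h => c * h) := by
        ext h
        simp only [Finset.mem_filter, Finset.mem_image, Finset.mem_univ, true_and]
        constructor
        · intro H
          refine ⟨c⁻¹ * h, (key h).mp H, by group⟩
        · rintro ⟨a, ha, rfl⟩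
          rw [key]
          have : c⁻¹ * (c * a) = a := by group
          rw [this]
          exact ha
      rw [e1, Finset.card_image_of_injective _ (mul_right_injective c)]
      have e2 : Nat.card ↥(Subgroup.centralizer ({x} : Set G))
          = Nat.card {h : G // x * h = h * x} := by
        refine Nat.card_congr (Equiv.subtypeEquivRight ?_)
        intro h
        simp [Subgroup.mem_centralizer_iff]
      rw [e2, Nat.card_eq_fintype_card, Fintype.card_subtype]
    rw [hcard, mul_comm, mul_assoc, mul_inv_cancel₀ hn, mul_one]
  · intro hnc
    rw [hΦ]
    rw [Finset.sum_eq_zero, mul_zero]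
    intro h _
    rw [hf, if_neg]
    intro H
    apply hnc
    refine isConj_iff.mpr ⟨h, ?_⟩
    rw [← H]
    group
end
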